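/- For σ > 0 and c ∈ ℝ, ∫_{0}^{∞} Δ² Φ((c−Δ)/σ) dΔ = (1/3)[(2σ³ + σc²) e^{−c²/(2σ²)}/√(2π) + (3cσ² + c³) Φ(c/σ)]. -/

import Mathlib

open Real MeasureTheory Filter Topology

/-- The standard normal cumulative distribution function. -/
noncomputable def Phi (x : ℝ) : ℝ :=
  ∫ t in Set.Iic x, Real.exp (-t^2 / 2) / Real.sqrt (2 * π)

noncomputable def phiAux (x : ℝ) : ℝ := Real.exp (-x^2 / 2) / Real.sqrt (2 * π)

lemma phiAux_nonneg (x : ℝ) : 0 ≤ phiAux x :=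
  div_nonneg (Real.exp_nonneg _) (Real.sqrt_nonneg _)

lemma phiAux_continuous : Continuous phiAux := by
  unfold phiAux
  fun_prop

lemma phiAux_integrable : Integrable phiAux := by
  have h : Integrable (fun x : ℝ => Real.exp (-(1/2) * x^2)) :=
    integrable_exp_neg_mul_sq (by norm_num)
  have : phiAux = fun x => Real.exp (-(1/2) * x^2) / Real.sqrt (2 * π) := by
    funext x; unfold phiAux; ring_nf
  rw [this]
  exact h.div_const _

lemma phiAux_le_exp (x : ℝ) : phiAux x ≤ Real.exp x := by
  unfold phiAux
  rw [div_le_iff₀ (by positivity : (0:ℝ) < Real.sqrt (2 * π))]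
  have h1 : Real.exp (-x^2/2) ≤ Real.exp x * Real.exp (1/2) := by
    rw [← Real.exp_add]
    apply Real.exp_le_exp.2
    nlinarith [sq_nonneg (x + 1)]
  refine h1.trans ?_
  have h2 : Real.exp (1/2) ≤ Real.sqrt (2 * π) := by
    rw [show Real.exp (1/2) = Real.sqrt (Real.exp 1) by
      rw [show (1:ℝ)/2 = 1 * (1/2) by norm_num, Real.exp_mul, Real.sqrt_eq_rpow]]
    apply Real.sqrt_le_sqrt
    have := Real.exp_one_lt_d9
    have := Real.pi_gt_three
    nlinarith
  nlinarith [Real.exp_nonneg x]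

lemma Phi_eq (x : ℝ) : Phi x = ∫ t in Set.Iic x, phiAux t := rfl

lemma Phi_nonneg (x : ℝ) : 0 ≤ Phi x := by
  rw [Phi_eq]
  exact integral_nonneg fun t => phiAux_nonneg t

lemma Phi_le_exp (x : ℝ) : Phi x ≤ Real.exp x := by
  rw [Phi_eq]
  calc ∫ t in Set.Iic x, phiAux t ≤ ∫ t in Set.Iic x, Real.exp t := by
        apply setIntegral_mono_on phiAux_integrable.integrableOn
          (integrableOn_exp_Iic x) measurableSet_Iic
        intro t _; exact phiAux_le_exp t
    _ = Real.exp x := integral_exp_Iic x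

lemma hasDerivAt_Phi (x : ℝ) : HasDerivAt Phi (phiAux x) x := by
  have key : ∀ y : ℝ, Phi y = (∫ t in (0:ℝ)..y, phiAux t) + Phi 0 := by
    intro y
    have h2 := intervalIntegral.integral_Iic_sub_Iic
      (f := phiAux) (μ := volume) (a := 0) (b := y)
      phiAux_integrable.integrableOn phiAux_integrable.integrableOn
    rw [Phi_eq, Phi_eq]
    linarith
  have h : HasDerivAt (fun y => (∫ t in (0:ℝ)..y, phiAux t) + Phi 0) (phiAux x) x := by
    apply HasDerivAt.add_const
    exact intervalIntegral.integral_hasDerivAt_right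
      phiAux_integrable.intervalIntegrable
      phiAux_continuous.stronglyMeasurable.stronglyMeasurableAtFilter
      phiAux_continuous.continuousAt
  exact (funext key : Phi = _) ▸ h

lemma hasDerivAt_phiAux (x : ℝ) : HasDerivAt phiAux (-x * phiAux x) x := by
  have h : HasDerivAt (fun y : ℝ => Real.exp (-y^2/2) / Real.sqrt (2 * π))
      (Real.exp (-x^2/2) * (-(2 * x^1)/2) / Real.sqrt (2 * π)) x := by
    exact (((hasDerivAt_pow 2 x).neg.div_const 2).exp).div_const _
  exact h.congr_deriv (by unfold phiAux; ring)

lemma tendsto_aux (σ c : ℝ) (hσ : 0 < σ) (k : ℕ) (Ψ : ℝ → ℝ)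
    (h0 : ∀ x, 0 ≤ Ψ x) (h1 : ∀ x, Ψ x ≤ Real.exp x) :
    Tendsto (fun Δ => Δ^k * Ψ ((c - Δ) / σ)) atTop (𝓝 0) := by
  have hbound : Tendsto (fun Δ => Δ^k * Real.exp ((c - Δ) / σ)) atTop (𝓝 0) := by
    have hcomp : Tendsto (fun Δ : ℝ => (Δ/σ)^k * Real.exp (-(Δ/σ))) atTop (𝓝 0) :=
      (tendsto_pow_mul_exp_neg_atTop_nhds_zero k).comp (tendsto_id.atTop_div_const hσ)
    have := (hcomp.const_mul (σ^k * Real.exp (c/σ)))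
    rw [mul_zero] at this
    refine this.congr fun Δ => ?_
    rw [show (c - Δ)/σ = c/σ - Δ/σ by ring, Real.exp_sub, Real.exp_neg, div_pow]
    field_simp
  apply squeeze_zero' (g := fun Δ => Δ^k * Real.exp ((c - Δ) / σ)) _ _ hbound
  · filter_upwards [eventually_ge_atTop (0:ℝ)] with Δ hΔ
    exact mul_nonneg (pow_nonneg hΔ k) (h0 _)
  · filter_upwards [eventually_ge_atTop (0:ℝ)] with Δ hΔ
    exact mul_le_mul_of_nonneg_left (h1 _) (pow_nonneg hΔ k)

theorem integral_sq_mul_Phi (σ c : ℝ) (hσ : 0 < σ) :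
    (∫ Δ in Set.Ici (0:ℝ), Δ^2 * Phi ((c - Δ) / σ))
      = (1/3) * ((2 * σ^3 + σ * c^2) * Real.exp (-c^2 / (2 * σ^2)) / Real.sqrt (2 * π)
          + (3 * c * σ^2 + c^3) * Phi (c / σ)) := by
  have hσ' : σ ≠ 0 := ne_of_gt hσ
  set H : ℝ → ℝ := fun Δ =>
    (Δ^3 - c^3 - 3*σ^2*c)/3 * Phi ((c - Δ)/σ)
      - σ/3 * (Δ^2 + c*Δ + c^2 + 2*σ^2) * phiAux ((c - Δ)/σ) with hH
  -- derivative
  have hderiv : ∀ Δ : ℝ, HasDerivAt H (Δ^2 * Phi ((c - Δ)/σ)) Δ := by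
    intro Δ
    have hu : HasDerivAt (fun Δ : ℝ => (c - Δ)/σ) (-1/σ) Δ := by
      simpa using ((hasDerivAt_id Δ).const_sub c).div_const σ
    have hPhi : HasDerivAt (fun Δ : ℝ => Phi ((c - Δ)/σ))
        (phiAux ((c - Δ)/σ) * (-1/σ)) Δ := (hasDerivAt_Phi _).comp Δ hu
    have hphi : HasDerivAt (fun Δ : ℝ => phiAux ((c - Δ)/σ))
        ((-((c - Δ)/σ) * phiAux ((c - Δ)/σ)) * (-1/σ)) Δ :=
      (hasDerivAt_phiAux _).comp Δ hu
    have hP : HasDerivAt (fun Δ : ℝ => (Δ^3 - c^3 - 3*σ^2*c)/3)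
        ((3 * Δ^2)/3) Δ := by
      exact (((hasDerivAt_pow 3 Δ).sub_const _).sub_const _).div_const 3 |>.congr_deriv (by ring)
    have hR : HasDerivAt (fun Δ : ℝ => σ/3 * (Δ^2 + c*Δ + c^2 + 2*σ^2))
        (σ/3 * (2*Δ + c)) Δ := by
      have : HasDerivAt (fun Δ : ℝ => Δ^2 + c*Δ + c^2 + 2*σ^2) (2*Δ + c) Δ := by
        have h1 := (hasDerivAt_pow 2 Δ).add ((hasDerivAt_id Δ).const_mul c)
        simpa using (h1.add_const (c^2)).add_const (2*σ^2) |>.congr_deriv (by ring)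
      exact this.const_mul _ |>.congr_deriv (by ring)
    have := (hP.mul hPhi).sub (hR.mul hphi)
    refine this.congr_deriv ?_
    field_simp
    ring
  -- limit at infinity
  have hlim : Tendsto H atTop (𝓝 0) := by
    have t3 := tendsto_aux σ c hσ 3 Phi Phi_nonneg Phi_le_exp
    have t0 := tendsto_aux σ c hσ 0 Phi Phi_nonneg Phi_le_exp
    have s2 := tendsto_aux σ c hσ 2 phiAux phiAux_nonneg phiAux_le_exp
    have s1 := tendsto_aux σ c hσ 1 phiAux phiAux_nonneg phiAux_le_exp
    have s0 := tendsto_aux σ c hσ 0 phiAux phiAux_nonneg phiAux_le_exp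
    have comb := (((((t3.const_mul (1/3 : ℝ)).sub
      (t0.const_mul ((c^3 + 3*σ^2*c)/3))).sub
      (s2.const_mul (σ/3))).sub
      (s1.const_mul (σ*c/3))).sub
      (s0.const_mul (σ*(c^2 + 2*σ^2)/3)))
    simp only [mul_zero, sub_zero, zero_sub, neg_zero] at comb
    refine comb.congr fun Δ => ?_
    simp only [hH, pow_zero, pow_one]
    ring
  have key := integral_Ioi_of_hasDerivAt_of_nonneg'
    (g := H) (g' := fun Δ => Δ^2 * Phi ((c - Δ)/σ)) (a := 0)
    (fun x _ => hderiv x)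
    (fun x _ => mul_nonneg (sq_nonneg x) (Phi_nonneg _))
    hlim
  rw [MeasureTheory.integral_Ici_eq_integral_Ioi, key, hH]
  simp only [sub_zero]
  unfold phiAux
  rw [show -(c/σ)^2/2 = -c^2/(2*σ^2) by ring]
  ring
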